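/- For every positive integer n and every real number α, the n×n Hankel determinant det(α·c_{i+j+2} + c_{i+j+3})_{i,j=0}^{n−1} equals (Σ_{j=0}^{n} g_{2j+1}(α)·g_{2j+1}(0)·∏_{ℓ=2j+1}^{2n} T_ℓ) · det(c_{i+j+1})_{i,j=0}^{n−1}. -/

import Mathlib

set_option linter.unusedVariables false
set_option linter.unreachableTactic false
set_option linter.unusedTactic false

/-- `dyckGF T n k` is the weighted Dyck path generating function `c(n,k)`:
`c(0,k) = [k = 0]`, `c(n,k) = 0` for `k < 0`, and
`c(n,k) = c(n-1,k-1) + T_k c(n-1,k+1)` for `n ≥ 1`, `k ≥ 0`. -/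
def dyckGF (T : ℕ → ℝ) : ℕ → ℤ → ℝ
  | 0, k => if k = 0 then 1 else 0
  | n+1, k =>
      if k < 0 then 0
      else dyckGF T n (k-1) + T k.toNat * dyckGF T n (k+1)

/-- The polynomials `g_n(α)`: `g_0 = 1`, `g_1 = 1`,
`g_{2n}(α) = α g_{2n-1}(α) + T_{2n-2} g_{2n-2}(α)` and
`g_{2n+1}(α) = g_{2n}(α) + T_{2n-1} g_{2n-1}(α)` for `n ≥ 1`. -/
def gpoly (T : ℕ → ℝ) (α : ℝ) : ℕ → ℝ
  | 0 => 1
  | 1 => 1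
  | n+2 => (if (n+2) % 2 = 0 then α else 1) * gpoly T α (n+1) + T n * gpoly T α n

variable (T : ℕ → ℝ)

lemma dyck_neg : ∀ (n : ℕ) (k : ℤ), k < 0 → dyckGF T n k = 0 := by
  intro n k hk
  cases n with
  | zero => simp [dyckGF]; omega
  | succ n => simp [dyckGF, hk]

lemma dyck_step (n : ℕ) (k : ℕ) :
    dyckGF T (n+1) (k:ℤ) = dyckGF T n ((k:ℤ)-1) + T k * dyckGF T n ((k:ℤ)+1) := by
  simp [dyckGF]

lemma dyck_big : ∀ (n : ℕ) (k : ℤ), (n:ℤ) < k → dyckGF T n k = 0 := by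
  intro n
  induction n with
  | zero => intro k hk; simp [dyckGF]; omega
  | succ n ih =>
    intro k hk
    rw [show dyckGF T (n+1) k = if k < 0 then 0 else dyckGF T n (k-1) + T k.toNat * dyckGF T n (k+1) from rfl]
    rw [if_neg (by omega)]
    rw [ih (k-1) (by push_cast; omega), ih (k+1) (by push_cast; omega)]
    ring

lemma dyck_diag : ∀ (n : ℕ), dyckGF T n (n:ℤ) = 1 := by
  intro n
  induction n with
  | zero => simp [dyckGF]
  | succ n ih =>
    rw [show ((n+1:ℕ):ℤ) = (n:ℤ)+1 by push_cast; ring, show dyckGF T (n+1) ((n:ℤ)+1) = if ((n:ℤ)+1) < 0 then 0 else dyckGF T n ((n:ℤ)+1-1) + T ((n:ℤ)+1).toNat * dyckGF T n ((n:ℤ)+1+1) from rfl]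
    rw [if_neg (by omega)]
    rw [show (n:ℤ)+1-1 = (n:ℤ) by ring, ih, dyck_big T n ((n:ℤ)+1+1) (by omega)]
    ring

lemma dyck_parity : ∀ (n : ℕ) (k : ℤ), (n:ℤ) % 2 ≠ k % 2 → dyckGF T n k = 0 := by
  intro n
  induction n with
  | zero =>
    intro k hk
    rw [show dyckGF T 0 k = if k = 0 then 1 else 0 from rfl]
    rw [if_neg (by omega)]
  | succ n ih =>
    intro k hk
    rw [show dyckGF T (n+1) k = if k < 0 then 0 else dyckGF T n (k-1) + T k.toNat * dyckGF T n (k+1) from rfl]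
    by_cases h : k < 0
    · rw [if_pos h]
    · rw [if_neg h, ih (k-1) (by push_cast at hk ⊢; omega), ih (k+1) (by push_cast at hk ⊢; omega)]
      ring

noncomputable def wP (T : ℕ → ℝ) : ℕ → ℝ := fun k => ∏ l ∈ Finset.range k, T l

variable (T : ℕ → ℝ)

lemma Sstep (a b N : ℕ) (ha : a < N) (hb : b < N) :
    ∑ k ∈ Finset.range N, dyckGF T (a+1) (k:ℤ) * dyckGF T b (k:ℤ) * wP T k
      = ∑ k ∈ Finset.range N, dyckGF T a (k:ℤ) * dyckGF T (b+1) (k:ℤ) * wP T k := by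
  obtain ⟨N', rfl⟩ : ∃ N', N = N'+1 := ⟨N-1, by omega⟩
  set Y : ℕ → ℕ → ℝ := fun m r =>
    ∑ k ∈ Finset.range (N'+1), T k * dyckGF T m ((k:ℤ)+1) * dyckGF T r (k:ℤ) * wP T k with hY
  have XY : ∀ (m r : ℕ), r ≤ N' →
      ∑ k ∈ Finset.range (N'+1), dyckGF T m ((k:ℤ)-1) * dyckGF T r (k:ℤ) * wP T k = Y r m := by
    intro m r hr
    rw [Finset.sum_range_succ' (fun k => dyckGF T m ((k:ℤ)-1) * dyckGF T r (k:ℤ) * wP T k)]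
    have h0 : dyckGF T m (((0:ℕ):ℤ)-1) = 0 := dyck_neg T m _ (by norm_num)
    rw [h0]
    simp only [zero_mul, add_zero, hY]
    rw [Finset.sum_range_succ]
    have hbig : dyckGF T r ((N':ℤ)+1) = 0 := dyck_big T r _ (by omega)
    rw [hbig]
    simp only [mul_zero, zero_mul, mul_zero, add_zero]
    apply Finset.sum_congr rfl
    intro k _
    have h1 : ((k+1:ℕ):ℤ) - 1 = (k:ℤ) := by push_cast; ring
    have h2 : ((k+1:ℕ):ℤ) = (k:ℤ)+1 := by push_cast; ring
    rw [h1, h2]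
    unfold wP
    rw [Finset.prod_range_succ]
    ring
  have expand : ∀ (m r : ℕ),
      ∑ k ∈ Finset.range (N'+1), dyckGF T (m+1) (k:ℤ) * dyckGF T r (k:ℤ) * wP T k
      = (∑ k ∈ Finset.range (N'+1), dyckGF T m ((k:ℤ)-1) * dyckGF T r (k:ℤ) * wP T k) + Y m r := by
    intro m r
    rw [hY]
    rw [← Finset.sum_add_distrib]
    apply Finset.sum_congr rfl
    intro k _
    rw [dyck_step]
    ring
  have comm : ∀ (m r : ℕ),
      ∑ k ∈ Finset.range (N'+1), dyckGF T m (k:ℤ) * dyckGF T r (k:ℤ) * wP T k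
      = ∑ k ∈ Finset.range (N'+1), dyckGF T r (k:ℤ) * dyckGF T m (k:ℤ) * wP T k := by
    intro m r
    apply Finset.sum_congr rfl
    intro k _
    ring
  rw [expand a b, XY a b (by omega), comm a (b+1), expand b a, XY b a (by omega)]
  ring

lemma Sfull : ∀ (a b N : ℕ), a + b < N →
    ∑ k ∈ Finset.range N, dyckGF T a (k:ℤ) * dyckGF T b (k:ℤ) * wP T k
      = dyckGF T (a+b) 0 := by
  intro a
  induction a with
  | zero =>
    intro b N hN
    rw [Finset.sum_eq_single 0]
    · have : dyckGF T 0 ((0:ℕ):ℤ) = 1 := by simp [dyckGF]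
      rw [this]
      unfold wP
      simp
    · intro k _ hk
      have : dyckGF T 0 (k:ℤ) = 0 := by
        simp [dyckGF]
        omega
      rw [this]; ring
    · intro h
      exact absurd (Finset.mem_range.mpr (by omega)) h
  | succ a ih =>
    intro b N hN
    rw [Sstep T a b N (by omega) (by omega), ih (b+1) N (by omega)]
    congr 1
    omega

lemma odd_extract (f : ℕ → ℝ) (hf : ∀ l, f (2*l) = 0) :
    ∀ M, ∑ k ∈ Finset.range (2*M), f k = ∑ l ∈ Finset.range M, f (2*l+1) := by
  intro M
  induction M with
  | zero => simp
  | succ M ih =>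
    have e : 2*(M+1) = (2*M+1)+1 := by ring
    rw [e, Finset.sum_range_succ, Finset.sum_range_succ, hf, ih, Finset.sum_range_succ]
    ring

/-- key combinatorial identity -/
lemma SP (i j P : ℕ) (hi : i < P) :
    ∑ l ∈ Finset.range P,
        dyckGF T (2*i+1) ((2*l+1 : ℕ):ℤ) * dyckGF T (2*j+1) ((2*l+1 : ℕ):ℤ) * wP T (2*l+1)
      = dyckGF T (2*(i+j+1)) 0 := by
  set f : ℕ → ℝ := fun k => dyckGF T (2*i+1) (k:ℤ) * dyckGF T (2*j+1) (k:ℤ) * wP T k with hf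
  have hfe : ∀ l, f (2*l) = 0 := by
    intro l
    have : dyckGF T (2*i+1) ((2*l:ℕ):ℤ) = 0 := by
      apply dyck_parity
      push_cast
      omega
    simp only [hf]
    rw [this]
    ring
  set Q := i + j + 2 + P with hQ
  have ext : ∑ l ∈ Finset.range P, f (2*l+1) = ∑ l ∈ Finset.range Q, f (2*l+1) := by
    apply Finset.sum_subset (Finset.range_subset_range.mpr (by omega))
    intro l _ hl
    rw [Finset.mem_range, not_lt] at hl
    have : dyckGF T (2*i+1) ((2*l+1:ℕ):ℤ) = 0 := by
      apply dyck_big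
      push_cast
      omega
    simp only [hf]
    rw [this]
    ring
  have h1 : ∑ l ∈ Finset.range Q, f (2*l+1) = ∑ k ∈ Finset.range (2*Q), f k :=
    (odd_extract f hfe Q).symm
  have h2 : ∑ k ∈ Finset.range (2*Q), f k = dyckGF T ((2*i+1)+(2*j+1)) 0 :=
    Sfull T (2*i+1) (2*j+1) (2*Q) (by omega)
  calc ∑ l ∈ Finset.range P,
        dyckGF T (2*i+1) ((2*l+1 : ℕ):ℤ) * dyckGF T (2*j+1) ((2*l+1 : ℕ):ℤ) * wP T (2*l+1)
      = ∑ l ∈ Finset.range P, f (2*l+1) := by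
        apply Finset.sum_congr rfl; intro l _; rw [hf]
    _ = dyckGF T ((2*i+1)+(2*j+1)) 0 := by rw [ext, h1, h2]
    _ = dyckGF T (2*(i+j+1)) 0 := by congr 1; ring

noncomputable def sJ (T : ℕ → ℝ) (k : ℕ) : ℝ := T (2*k) + T (2*k+1)
noncomputable def tJ (T : ℕ → ℝ) (k : ℕ) : ℝ := T (2*k+1) * T (2*k+2)
noncomputable def Jq (T : ℕ → ℝ) (l k : ℕ) : ℝ :=
  if l = k+1 then tJ T k else if l = k then sJ T k else if l+1 = k then 1 else 0

lemma two_step (m k : ℕ) :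
    dyckGF T (m+2) (2*(k:ℤ)+1)
      = dyckGF T m (2*(k:ℤ)-1) + sJ T k * dyckGF T m (2*(k:ℤ)+1)
        + tJ T k * dyckGF T m (2*(k:ℤ)+3) := by
  have e1 : 2*(k:ℤ)+1 = ((2*k+1:ℕ):ℤ) := by push_cast; ring
  have h1 := dyck_step T (m+1) (2*k+1)
  have h2 := dyck_step T m (2*k)
  have h3 := dyck_step T m (2*k+2)
  have e2 : ((2*k+1:ℕ):ℤ)-1 = ((2*k:ℕ):ℤ) := by push_cast; ring
  have e3 : ((2*k+1:ℕ):ℤ)+1 = ((2*k+2:ℕ):ℤ) := by push_cast; ring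
  rw [e1, show m+2 = (m+1)+1 from rfl, h1, e2, e3, h2, h3]
  have e4 : ((2*k:ℕ):ℤ)-1 = 2*(k:ℤ)-1 := by push_cast; ring
  have e5 : ((2*k:ℕ):ℤ)+1 = 2*(k:ℤ)+1 := by push_cast; ring
  have e6 : ((2*k+2:ℕ):ℤ)-1 = 2*(k:ℤ)+1 := by push_cast; ring
  have e7 : ((2*k+2:ℕ):ℤ)+1 = 2*(k:ℤ)+3 := by push_cast; ring
  rw [e4, e5, e6, e7]
  unfold sJ tJ
  push_cast
  ring

lemma step_sum (m k N : ℕ) (hN : k+2 ≤ N) :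
    dyckGF T (m+2) (2*(k:ℤ)+1)
      = ∑ l ∈ Finset.range N, dyckGF T m (2*(l:ℤ)+1) * Jq T l k := by
  have split : ∀ l : ℕ, dyckGF T m (2*(l:ℤ)+1) * Jq T l k
      = (if l = k+1 then dyckGF T m (2*(l:ℤ)+1) * tJ T k else 0)
        + (if l = k then dyckGF T m (2*(l:ℤ)+1) * sJ T k else 0)
        + (if l+1 = k then dyckGF T m (2*(l:ℤ)+1) else 0) := by
    intro l
    unfold Jq
    split_ifs <;> (try omega) <;> ring
  rw [Finset.sum_congr rfl (fun l _ => split l)]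
  rw [Finset.sum_add_distrib, Finset.sum_add_distrib]
  rw [Finset.sum_ite_eq' (Finset.range N) (k+1) (fun l => dyckGF T m (2*(l:ℤ)+1) * tJ T k)]
  rw [Finset.sum_ite_eq' (Finset.range N) k (fun l => dyckGF T m (2*(l:ℤ)+1) * sJ T k)]
  rw [if_pos (Finset.mem_range.mpr (by omega)), if_pos (Finset.mem_range.mpr (by omega))]
  have last : (∑ l ∈ Finset.range N, if l+1 = k then dyckGF T m (2*(l:ℤ)+1) else 0)
      = dyckGF T m (2*(k:ℤ)-1) := by
    cases k with
    | zero =>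
      rw [Finset.sum_eq_zero, dyck_neg T m _ (by omega)]
      intro l _
      rw [if_neg (by omega)]
    | succ k' =>
      have : ∀ l ∈ Finset.range N, (if l+1 = k'+1 then dyckGF T m (2*(l:ℤ)+1) else 0)
          = (if l = k' then dyckGF T m (2*(l:ℤ)+1) else 0) := by
        intro l _
        exact if_congr (by omega) rfl rfl
      rw [Finset.sum_congr rfl this,
        Finset.sum_ite_eq' (Finset.range N) k' (fun l => dyckGF T m (2*(l:ℤ)+1)),
        if_pos (Finset.mem_range.mpr (by omega))]
      congr 1
      push_cast
      ring
  rw [last, two_step]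
  have e : 2*((k+1:ℕ):ℤ)+1 = 2*(k:ℤ)+3 := by push_cast; ring
  rw [e]
  ring

lemma step_sum' (m k N : ℕ) (hN : m ≤ 2*N) :
    dyckGF T (m+2) (2*(k:ℤ)+1)
      = ∑ l ∈ Finset.range N, dyckGF T m (2*(l:ℤ)+1) * Jq T l k := by
  rw [step_sum T m k (max N (k+2)) (le_max_right _ _)]
  symm
  apply Finset.sum_subset (Finset.range_subset_range.mpr (le_max_left _ _))
  intro l _ hl
  rw [Finset.mem_range, not_lt] at hl
  rw [dyck_big T m (2*(l:ℤ)+1) (by push_cast; omega)]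
  ring

noncomputable def tridet (d e f : ℕ → ℝ) : ℕ → ℕ → ℝ
  | _, 0 => 1
  | o, 1 => d o
  | o, n+2 => d o * tridet d e f (o+1) (n+1) - e o * f o * tridet d e f (o+2) n
  termination_by _ n => n

noncomputable def triM (d e f : ℕ → ℝ) (o n : ℕ) : Matrix (Fin n) (Fin n) ℝ :=
  Matrix.of fun i j => if (i:ℕ) = (j:ℕ) then d (o+(i:ℕ))
    else if (i:ℕ)+1 = (j:ℕ) then e (o+(i:ℕ))
    else if (i:ℕ) = (j:ℕ)+1 then f (o+(j:ℕ)) else 0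

lemma tridet_two (d e f : ℕ → ℝ) (o n : ℕ) :
    tridet d e f o (n+2) = d o * tridet d e f (o+1) (n+1) - e o * f o * tridet d e f (o+2) n := by
  rw [tridet]

lemma TRI (d e f : ℕ → ℝ) : ∀ n o, (triM d e f o n).det = tridet d e f o n := by
  intro n
  induction n using Nat.strong_induction_on with
  | _ n ih =>
    intro o
    match n with
    | 0 => simp [tridet, Matrix.det_fin_zero]
    | 1 => simp [tridet, Matrix.det_fin_one, triM]
    | (n+2) =>
      rw [Matrix.det_succ_row_zero, Fin.sum_univ_succ, Fin.sum_univ_succ]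
      have tail : ∀ j : Fin n,
          (-1:ℝ)^((j.succ.succ : Fin (n+2)):ℕ) * triM d e f o (n+2) 0 j.succ.succ
            * ((triM d e f o (n+2)).submatrix Fin.succ (j.succ.succ).succAbove).det = 0 := by
        intro j
        have h : triM d e f o (n+2) 0 j.succ.succ = 0 := by
          simp only [triM, Matrix.of_apply, Fin.val_succ, Fin.val_zero]
          split_ifs <;> first | rfl | omega | (simp only [Fin.val_zero, Fin.val_succ] at * <;> omega)
        rw [h]; ring
      rw [Finset.sum_congr rfl (fun j _ => tail j), Finset.sum_const_zero, add_zero]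
      have h00 : triM d e f o (n+2) 0 0 = d o := by simp [triM]
      have h01 : triM d e f o (n+2) 0 1 = e o := by simp [triM]
      have sub0 : (triM d e f o (n+2)).submatrix Fin.succ ((0:Fin (n+2)).succAbove)
          = triM d e f (o+1) (n+1) := by
        rw [Fin.succAbove_zero]
        ext i j
        simp only [Matrix.submatrix_apply, triM, Matrix.of_apply, Fin.val_succ]
        split_ifs <;> first | rfl | (congr 1; omega) | (exfalso; omega)
      set N := (triM d e f o (n+2)).submatrix Fin.succ ((1:Fin (n+2)).succAbove) with hN
      have hNdet : N.det = f o * tridet d e f (o+2) n := by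
        rw [Matrix.det_succ_column_zero, Fin.sum_univ_succ]
        have tail2 : ∀ i : Fin n,
            (-1:ℝ)^((i.succ : Fin (n+1)):ℕ) * N i.succ 0
              * (N.submatrix i.succ.succAbove Fin.succ).det = 0 := by
          intro i
          have h : N i.succ 0 = 0 := by
            rw [hN]
            have h0 : ((1:Fin (n+2)).succAbove 0) = 0 := by
              apply Fin.succAbove_of_castSucc_lt
              simp [Fin.lt_def, Fin.castSucc]
            simp only [Matrix.submatrix_apply, h0, triM, Matrix.of_apply, Fin.val_succ,
              Fin.val_zero]
            split_ifs <;> first | rfl | omega | (simp only [Fin.val_zero, Fin.val_succ] at * <;> omega)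
          rw [h]; ring
        rw [Finset.sum_congr rfl (fun i _ => tail2 i), Finset.sum_const_zero, add_zero]
        have hN00 : N 0 0 = f o := by
          rw [hN]
          simp [triM, Fin.succAbove]
        have hsub : N.submatrix ((0:Fin (n+1)).succAbove) Fin.succ = triM d e f (o+2) n := by
          rw [Fin.succAbove_zero, hN]
          ext i j
          have hj : ((1:Fin (n+2)).succAbove j.succ) = j.succ.succ := by
            apply Fin.succAbove_of_le_castSucc
            simp [Fin.le_def, Fin.castSucc]
          simp only [Matrix.submatrix_apply, hj, triM, Matrix.of_apply, Fin.val_succ]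
          split_ifs <;> first | rfl | (congr 1; omega) | (exfalso; omega)
        rw [hN00, hsub, ih n (by omega)]
        simp
      simp only [Fin.succ_zero_eq_one]
      rw [h00, h01, sub0, hNdet, ih (n+1) (by omega), tridet_two]
      norm_num
      ring

lemma tridet_zero (d e f : ℕ → ℝ) (o : ℕ) : tridet d e f o 0 = 1 := by rw [tridet]
lemma tridet_one (d e f : ℕ → ℝ) (o : ℕ) : tridet d e f o 1 = d o := by rw [tridet]

lemma tridet_top (d e f : ℕ → ℝ) : ∀ n o, tridet d e f o (n+2)
    = d (o+n+1) * tridet d e f o (n+1) - e (o+n) * f (o+n) * tridet d e f o n := by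
  intro n
  induction n using Nat.strong_induction_on with
  | _ n ih =>
    intro o
    match n with
    | 0 =>
      have A := tridet_two d e f o 0
      norm_num at A ⊢
      rw [A]
      simp only [tridet_zero, tridet_one]
      ring
    | 1 =>
      have A := tridet_two d e f o 1
      have B := tridet_two d e f (o+1) 0
      have C := tridet_two d e f o 0
      norm_num at A B C ⊢
      rw [A, B, C]
      simp only [tridet_zero, tridet_one]
      ring
    | (n+2) =>
      have L1 : tridet d e f o (n+4) = d o * tridet d e f (o+1) (n+3)
          - e o * f o * tridet d e f (o+2) (n+2) := by
        have := tridet_two d e f o (n+2)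
        rw [show n+2+2 = n+4 from by omega, show n+2+1 = n+3 from by omega] at this
        exact this
      have L2 : tridet d e f o (n+3) = d o * tridet d e f (o+1) (n+2)
          - e o * f o * tridet d e f (o+2) (n+1) := by
        have := tridet_two d e f o (n+1)
        rw [show n+1+2 = n+3 from by omega, show n+1+1 = n+2 from by omega] at this
        exact this
      have L3 : tridet d e f o (n+2) = d o * tridet d e f (o+1) (n+1)
          - e o * f o * tridet d e f (o+2) n := tridet_two d e f o n
      have I1 := ih (n+1) (by omega) (o+1)
      have I2 := ih n (by omega) (o+2)
      rw [show o+1+(n+1)+1 = o+(n+2)+1 from by omega, show o+1+(n+1) = o+(n+2) from by omega,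
        show n+1+2 = n+3 from by omega, show n+1+1 = n+2 from by omega] at I1
      rw [show o+2+n+1 = o+(n+2)+1 from by omega, show o+2+n = o+(n+2) from by omega] at I2
      rw [show n+2+2 = n+4 from by omega, show n+2+1 = n+3 from by omega]
      rw [L1, I1, I2, L2, L3]
      ring

lemma gpoly_zero (T : ℕ → ℝ) (x : ℝ) : gpoly T x 0 = 1 := rfl
lemma gpoly_one (T : ℕ → ℝ) (x : ℝ) : gpoly T x 1 = 1 := rfl
lemma gpoly_two (T : ℕ → ℝ) (x : ℝ) (n : ℕ) :
    gpoly T x (n+2) = (if (n+2) % 2 = 0 then x else 1) * gpoly T x (n+1) + T n * gpoly T x n := by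
  rw [gpoly]

lemma gpoly_odd_rec (T : ℕ → ℝ) (x : ℝ) (n : ℕ) :
    gpoly T x (2*(n+2)+1) = (x + sJ T (n+1)) * gpoly T x (2*(n+1)+1)
      - tJ T n * gpoly T x (2*n+1) := by
  have h5 : gpoly T x (2*n+5) = 1 * gpoly T x (2*n+4) + T (2*n+3) * gpoly T x (2*n+3) := by
    have := gpoly_two T x (2*n+3)
    rw [if_neg (by omega)] at this
    rw [show 2*n+5 = 2*n+3+2 from by omega, this, show 2*n+3+1 = 2*n+4 from by omega]
  have h4 : gpoly T x (2*n+4) = x * gpoly T x (2*n+3) + T (2*n+2) * gpoly T x (2*n+2) := by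
    have := gpoly_two T x (2*n+2)
    rw [if_pos (by omega)] at this
    rw [show 2*n+4 = 2*n+2+2 from by omega, this, show 2*n+2+1 = 2*n+3 from by omega]
  have h3 : gpoly T x (2*n+3) = 1 * gpoly T x (2*n+2) + T (2*n+1) * gpoly T x (2*n+1) := by
    have := gpoly_two T x (2*n+1)
    rw [if_neg (by omega)] at this
    rw [show 2*n+3 = 2*n+1+2 from by omega, this, show 2*n+1+1 = 2*n+2 from by omega]
  rw [show 2*(n+2)+1 = 2*n+5 from by omega, show 2*(n+1)+1 = 2*n+3 from by omega, h5, h4]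
  unfold sJ tJ
  rw [show 2*(n+1)+1 = 2*n+3 from by omega, show 2*(n+1) = 2*n+2 from by omega]
  have h2 : T (2*n+2) * gpoly T x (2*n+2)
      = T (2*n+2) * gpoly T x (2*n+3) - T (2*n+2) * (T (2*n+1) * gpoly T x (2*n+1)) := by
    rw [h3]; ring
  rw [h2]
  ring

lemma gpoly_eq_tridet (T : ℕ → ℝ) (x : ℝ) :
    ∀ n, tridet (fun k => x + sJ T k) (fun _ => 1) (tJ T) 0 n = gpoly T x (2*n+1) := by
  intro n
  induction n using Nat.strong_induction_on with
  | _ n ih =>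
    match n with
    | 0 => rw [tridet_zero]; rfl
    | 1 =>
      rw [tridet_one]
      show x + sJ T 0 = gpoly T x 3
      rw [show (3:ℕ) = 1+2 from rfl, gpoly_two, if_neg (by omega), show (1:ℕ)+1 = 0+2 from rfl,
        gpoly_two, if_pos (by omega)]
      rw [show (0:ℕ)+1 = 1 from rfl, gpoly_zero, gpoly_one]
      unfold sJ
      norm_num
      ring
    | (n+2) =>
      rw [tridet_top]
      rw [ih (n+1) (by omega), ih n (by omega), gpoly_odd_rec]
      simp only [Nat.zero_add]
      ring

lemma tri_det (T : ℕ → ℝ) (x : ℝ) (m : ℕ) :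
    (triM (fun k => x + sJ T k) (fun _ => 1) (tJ T) 0 m).det = gpoly T x (2*m+1) := by
  rw [TRI, gpoly_eq_tridet]

open Matrix in
section
variable (T : ℕ → ℝ) (α : ℝ) (n : ℕ)
open Matrix

noncomputable def Ew : Matrix (Fin n) (Fin n) ℝ :=
  Matrix.of fun i l => dyckGF T (2*(i:ℕ)+1) (2*((l:ℕ):ℤ)+1)
noncomputable def Dw : Matrix (Fin n) (Fin n) ℝ :=
  Matrix.diagonal (fun l : Fin n => wP T (2*(l:ℕ)+1))
noncomputable def Mm : Matrix (Fin n) (Fin n) ℝ :=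
  Matrix.of fun j k => α * dyckGF T (2*(j:ℕ)+3) (2*((k:ℕ):ℤ)+1)
    + dyckGF T (2*(j:ℕ)+5) (2*((k:ℕ):ℤ)+1)
noncomputable def An : Matrix (Fin n) (Fin n) ℝ := Matrix.of fun l k => Jq T (l:ℕ) (k:ℕ)
noncomputable def Bn : Matrix (Fin n) (Fin n) ℝ :=
  Matrix.of fun l k => (if (l:ℕ) = (k:ℕ) then α else 0) + Jq T (l:ℕ) (k:ℕ)
noncomputable def Pm : Matrix (Fin n) (Fin n) ℝ :=
  Matrix.of fun l k => α * Jq T (l:ℕ) (k:ℕ)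
    + ∑ m ∈ Finset.range (n+1), Jq T (l:ℕ) m * Jq T m (k:ℕ)

lemma cast21 (l : ℕ) : (2*((l:ℕ):ℤ)+1) = ((2*l+1 : ℕ):ℤ) := by push_cast; ring

lemma Ew_det : (Ew T n).det = 1 := by
  have htri : (Ew T n).BlockTriangular OrderDual.toDual := by
    intro i j hij
    simp only [OrderDual.toDual_lt_toDual] at hij
    show dyckGF T (2*(i:ℕ)+1) (2*((j:ℕ):ℤ)+1) = 0
    apply dyck_big
    have : (i:ℕ) < (j:ℕ) := hij
    push_cast
    omega
  rw [Matrix.det_of_lowerTriangular _ htri]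
  apply Finset.prod_eq_one
  intro i _
  show dyckGF T (2*(i:ℕ)+1) (2*((i:ℕ):ℤ)+1) = 1
  rw [cast21, dyck_diag]

lemma I1 : (Matrix.of fun i j : Fin n =>
    dyckGF T (2 * ((i : ℕ) + (j : ℕ) + 1)) 0) = Ew T n * Dw T n * (Ew T n)ᵀ := by
  ext i j
  rw [Matrix.mul_apply]
  simp only [Matrix.mul_diagonal, Matrix.transpose_apply, Ew, Dw, Matrix.of_apply]
  have h : ∑ l : Fin n, dyckGF T (2*(i:ℕ)+1) (2*((l:ℕ):ℤ)+1) * wP T (2*(l:ℕ)+1)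
        * dyckGF T (2*(j:ℕ)+1) (2*((l:ℕ):ℤ)+1)
      = ∑ l ∈ Finset.range n, dyckGF T (2*(i:ℕ)+1) ((2*l+1:ℕ):ℤ)
        * dyckGF T (2*(j:ℕ)+1) ((2*l+1:ℕ):ℤ) * wP T (2*l+1) := by
    rw [← Fin.sum_univ_eq_sum_range]
    apply Finset.sum_congr rfl
    intro l _
    rw [cast21]
    ring
  rw [h, SP T i j n i.isLt]

lemma I2 : (Matrix.of fun i j : Fin n =>
      α * dyckGF T (2 * ((i : ℕ) + (j : ℕ) + 2)) 0
        + dyckGF T (2 * ((i : ℕ) + (j : ℕ) + 3)) 0)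
    = Ew T n * Dw T n * (Mm T α n)ᵀ := by
  ext i j
  rw [Matrix.mul_apply]
  simp only [Matrix.mul_diagonal, Matrix.transpose_apply, Ew, Dw, Mm, Matrix.of_apply]
  have expand : ∀ l : Fin n,
      dyckGF T (2*(i:ℕ)+1) (2*((l:ℕ):ℤ)+1) * wP T (2*(l:ℕ)+1)
        * (α * dyckGF T (2*(j:ℕ)+3) (2*((l:ℕ):ℤ)+1) + dyckGF T (2*(j:ℕ)+5) (2*((l:ℕ):ℤ)+1))
      = α * (dyckGF T (2*(i:ℕ)+1) ((2*(l:ℕ)+1:ℕ):ℤ) * dyckGF T (2*((j:ℕ)+1)+1) ((2*(l:ℕ)+1:ℕ):ℤ)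
            * wP T (2*(l:ℕ)+1))
        + dyckGF T (2*(i:ℕ)+1) ((2*(l:ℕ)+1:ℕ):ℤ) * dyckGF T (2*((j:ℕ)+2)+1) ((2*(l:ℕ)+1:ℕ):ℤ)
            * wP T (2*(l:ℕ)+1) := by
    intro l
    rw [cast21, show 2*((j:ℕ)+1)+1 = 2*(j:ℕ)+3 from by omega,
      show 2*((j:ℕ)+2)+1 = 2*(j:ℕ)+5 from by omega]
    ring
  rw [Finset.sum_congr rfl (fun l _ => expand l), Finset.sum_add_distrib, ← Finset.mul_sum]
  rw [Fin.sum_univ_eq_sum_range (fun l => dyckGF T (2*(i:ℕ)+1) ((2*l+1:ℕ):ℤ)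
    * dyckGF T (2*((j:ℕ)+1)+1) ((2*l+1:ℕ):ℤ) * wP T (2*l+1)) n]
  rw [Fin.sum_univ_eq_sum_range (fun l => dyckGF T (2*(i:ℕ)+1) ((2*l+1:ℕ):ℤ)
    * dyckGF T (2*((j:ℕ)+2)+1) ((2*l+1:ℕ):ℤ) * wP T (2*l+1)) n]
  rw [SP T i ((j:ℕ)+1) n i.isLt, SP T i ((j:ℕ)+2) n i.isLt]
  rw [show (i:ℕ)+((j:ℕ)+1)+1 = (i:ℕ)+(j:ℕ)+2 from by omega,
    show (i:ℕ)+((j:ℕ)+2)+1 = (i:ℕ)+(j:ℕ)+3 from by omega]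

lemma I3 : Mm T α n = Ew T n * Pm T α n := by
  ext j k
  rw [Matrix.mul_apply]
  simp only [Ew, Pm, Mm, Matrix.of_apply]
  have expand : ∀ l : Fin n,
      dyckGF T (2*(j:ℕ)+1) (2*((l:ℕ):ℤ)+1)
        * (α * Jq T (l:ℕ) (k:ℕ) + ∑ m ∈ Finset.range (n+1), Jq T (l:ℕ) m * Jq T m (k:ℕ))
      = α * (dyckGF T (2*(j:ℕ)+1) (2*((l:ℕ):ℤ)+1) * Jq T (l:ℕ) (k:ℕ))
        + ∑ m ∈ Finset.range (n+1),
            (dyckGF T (2*(j:ℕ)+1) (2*((l:ℕ):ℤ)+1) * Jq T (l:ℕ) m) * Jq T m (k:ℕ) := by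
    intro l
    rw [mul_add, Finset.mul_sum]
    congr 1
    · ring
    · apply Finset.sum_congr rfl
      intro m _
      ring
  rw [Finset.sum_congr rfl (fun l _ => expand l), Finset.sum_add_distrib, ← Finset.mul_sum]
  have S1 : ∑ l : Fin n, dyckGF T (2*(j:ℕ)+1) (2*((l:ℕ):ℤ)+1) * Jq T (l:ℕ) (k:ℕ)
      = dyckGF T (2*(j:ℕ)+3) (2*((k:ℕ):ℤ)+1) := by
    rw [Fin.sum_univ_eq_sum_range (fun l => dyckGF T (2*(j:ℕ)+1) (2*((l:ℕ):ℤ)+1) * Jq T l (k:ℕ)) n]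
    rw [← step_sum' T (2*(j:ℕ)+1) (k:ℕ) n (by omega)]
  have S2 : ∑ l : Fin n, ∑ m ∈ Finset.range (n+1),
        (dyckGF T (2*(j:ℕ)+1) (2*((l:ℕ):ℤ)+1) * Jq T (l:ℕ) m) * Jq T m (k:ℕ)
      = dyckGF T (2*(j:ℕ)+5) (2*((k:ℕ):ℤ)+1) := by
    rw [Finset.sum_comm]
    have inner : ∀ m ∈ Finset.range (n+1),
        ∑ l : Fin n, (dyckGF T (2*(j:ℕ)+1) (2*((l:ℕ):ℤ)+1) * Jq T (l:ℕ) m) * Jq T m (k:ℕ)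
        = dyckGF T (2*(j:ℕ)+3) (2*((m:ℕ):ℤ)+1) * Jq T m (k:ℕ) := by
      intro m _
      rw [← Finset.sum_mul]
      congr 1
      rw [Fin.sum_univ_eq_sum_range (fun l => dyckGF T (2*(j:ℕ)+1) (2*((l:ℕ):ℤ)+1) * Jq T l m) n]
      rw [← step_sum' T (2*(j:ℕ)+1) m n (by omega)]
    rw [Finset.sum_congr rfl inner]
    rw [← step_sum' T (2*(j:ℕ)+3) (k:ℕ) (n+1) (by omega)]
  rw [S1, S2]

lemma Jq_tri (x : ℝ) (l k : ℕ) :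
    (if l = k then x else 0) + Jq T l k
      = if l = k then x + sJ T (0+l) else if l+1 = k then 1
        else if l = k+1 then tJ T (0+k) else 0 := by
  unfold Jq
  by_cases h2 : l = k
  · subst h2
    rw [if_pos rfl, if_neg (show ¬l = l+1 by omega), if_pos rfl, if_pos rfl, Nat.zero_add]
  · by_cases h1 : l = k+1
    · rw [if_neg h2, if_pos h1, if_neg h2, if_neg (show ¬l+1 = k by omega), if_pos h1,
        Nat.zero_add]
      ring
    · by_cases h3 : l+1 = k
      · rw [if_neg h2, if_neg h1, if_neg h2, if_pos h3, if_neg h2, if_pos h3]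
        ring
      · rw [if_neg h2, if_neg h1, if_neg h2, if_neg h3, if_neg h2, if_neg h3, if_neg h1]
        ring

lemma An_det : (An T n).det = gpoly T 0 (2*n+1) := by
  rw [← tri_det T 0 n]
  congr 1
  ext l k
  show Jq T (l:ℕ) (k:ℕ)
      = if (l:ℕ) = (k:ℕ) then 0 + sJ T (0+(l:ℕ)) else if (l:ℕ)+1 = (k:ℕ) then 1
        else if (l:ℕ) = (k:ℕ)+1 then tJ T (0+(k:ℕ)) else 0
  rw [← Jq_tri T 0]
  simp

lemma Bn_det : (Bn T α n).det = gpoly T α (2*n+1) := by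
  rw [← tri_det T α n]
  congr 1
  ext l k
  show (if (l:ℕ) = (k:ℕ) then α else 0) + Jq T (l:ℕ) (k:ℕ)
      = if (l:ℕ) = (k:ℕ) then α + sJ T (0+(l:ℕ)) else if (l:ℕ)+1 = (k:ℕ) then 1
        else if (l:ℕ) = (k:ℕ)+1 then tJ T (0+(k:ℕ)) else 0
  rw [Jq_tri T α]

lemma AB_apply (m : ℕ) (l k : Fin m) :
    (An T m * Bn T α m) l k
      = α * Jq T (l:ℕ) (k:ℕ) + ∑ i ∈ Finset.range m, Jq T (l:ℕ) i * Jq T i (k:ℕ) := by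
  rw [Matrix.mul_apply]
  have h1 : ∀ i : Fin m, An T m l i * Bn T α m i k
      = (if i = k then Jq T (l:ℕ) (i:ℕ) * α else 0) + Jq T (l:ℕ) (i:ℕ) * Jq T (i:ℕ) (k:ℕ) := by
    intro i
    show Jq T (l:ℕ) (i:ℕ) * ((if (i:ℕ) = (k:ℕ) then α else 0) + Jq T (i:ℕ) (k:ℕ)) = _
    by_cases h : i = k
    · rw [if_pos (show (i:ℕ) = (k:ℕ) from by rw [h]), if_pos h]; ring
    · rw [if_neg (fun hv => h (Fin.ext hv)), if_neg h]; ring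
  rw [Finset.sum_congr rfl (fun i _ => h1 i), Finset.sum_add_distrib,
    Finset.sum_ite_eq' Finset.univ k (fun i => Jq T (l:ℕ) (i:ℕ) * α),
    if_pos (Finset.mem_univ k),
    Fin.sum_univ_eq_sum_range (fun i => Jq T (l:ℕ) i * Jq T i (k:ℕ)) m]
  ring

lemma Jq_top (m : ℕ) (l : Fin (m+1)) (hl : l ≠ Fin.last m) : Jq T (l:ℕ) (m+1) = 0 := by
  have hv : (l:ℕ) < m := by
    have := l.isLt
    have : (l:ℕ) ≠ m := fun h => hl (Fin.ext h)
    omega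
  unfold Jq
  rw [if_neg (by omega), if_neg (by omega), if_neg (by omega)]

lemma Pm_update (n : ℕ) :
    Pm T α (n+1) = Matrix.updateRow (An T (n+1) * Bn T α (n+1)) (Fin.last n)
      ((An T (n+1) * Bn T α (n+1)) (Fin.last n) + tJ T n • (Pi.single (Fin.last n) 1 : Fin (n+1) → ℝ)) := by
  ext l k
  rw [Matrix.updateRow_apply]
  by_cases hl : l = Fin.last n
  · rw [if_pos hl]
    subst hl
    show α * Jq T ((Fin.last n : Fin (n+1)):ℕ) (k:ℕ)
        + ∑ i ∈ Finset.range (n+1+1), Jq T ((Fin.last n : Fin (n+1)):ℕ) i * Jq T i (k:ℕ) = _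
    rw [Finset.sum_range_succ]
    simp only [Pi.add_apply, Pi.smul_apply, smul_eq_mul]
    rw [AB_apply]
    rw [add_assoc]
    congr 1
    have hlast : ((Fin.last n : Fin (n+1)):ℕ) = n := Fin.val_last n
    rw [hlast]
    have e1 : Jq T n (n+1) = 1 := by
      unfold Jq
      rw [if_neg (by omega), if_neg (by omega), if_pos (by omega)]
    rw [e1, one_mul]
    have hsingle : (Pi.single (Fin.last n) 1 : Fin (n+1) → ℝ) k = if (k:ℕ) = n then 1 else 0 := by
      rw [Pi.single_apply]
      by_cases h : k = Fin.last n
      · rw [if_pos h, if_pos (by rw [h]; exact Fin.val_last n)]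
      · rw [if_neg h, if_neg (fun hv => h (Fin.ext (by rw [hv]; exact (Fin.val_last n).symm)))]
    rw [hsingle]
    by_cases hk : (k:ℕ) = n
    · rw [if_pos hk]
      unfold Jq
      rw [if_pos (by omega)]
      rw [hk]
      ring
    · rw [if_neg hk]
      unfold Jq
      rw [if_neg (by omega), if_neg (by have := k.isLt; omega), if_neg (by have := k.isLt; omega)]
      ring
  · rw [if_neg hl]
    show α * Jq T (l:ℕ) (k:ℕ)
        + ∑ i ∈ Finset.range (n+1+1), Jq T (l:ℕ) i * Jq T i (k:ℕ) = _
    rw [Finset.sum_range_succ, AB_apply, Jq_top T n l hl]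
    ring

lemma det_single (n : ℕ) (X : Matrix (Fin (n+1)) (Fin (n+1)) ℝ) :
    (Matrix.updateRow X (Fin.last n) (Pi.single (Fin.last n) 1)).det
      = (X.submatrix Fin.castSucc Fin.castSucc).det := by
  rw [Matrix.det_succ_row _ (Fin.last n)]
  rw [Finset.sum_eq_single (Fin.last n)]
  · rw [Matrix.updateRow_self, Pi.single_eq_same]
    have hsign : (-1:ℝ)^(((Fin.last n):ℕ) + ((Fin.last n):ℕ)) = 1 := by
      rw [Fin.val_last]
      exact Even.neg_one_pow ⟨n, by ring⟩
    rw [hsign, one_mul, one_mul]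
    have hsub : (Matrix.updateRow X (Fin.last n) (Pi.single (Fin.last n) 1)).submatrix
        (Fin.last n).succAbove (Fin.last n).succAbove = X.submatrix Fin.castSucc Fin.castSucc := by
      rw [Fin.succAbove_last]
      ext i j
      rw [Matrix.submatrix_apply, Matrix.submatrix_apply,
        Matrix.updateRow_apply, if_neg (Fin.castSucc_lt_last i).ne]
    rw [hsub]
  · intro j _ hj
    rw [Matrix.updateRow_self, Pi.single_apply, if_neg hj]
    ring
  · intro h
    exact absurd (Finset.mem_univ _) h

lemma AB_sub (n : ℕ) :
    (An T (n+1) * Bn T α (n+1)).submatrix Fin.castSucc Fin.castSucc = Pm T α n := by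
  ext l k
  rw [Matrix.submatrix_apply, AB_apply]
  show α * Jq T ((Fin.castSucc l):ℕ) ((Fin.castSucc k):ℕ)
      + ∑ i ∈ Finset.range (n+1), Jq T ((Fin.castSucc l):ℕ) i * Jq T i ((Fin.castSucc k):ℕ)
    = α * Jq T (l:ℕ) (k:ℕ) + ∑ i ∈ Finset.range (n+1), Jq T (l:ℕ) i * Jq T i (k:ℕ)
  rw [Fin.coe_castSucc, Fin.coe_castSucc]

lemma Pm_det : ∀ m, (Pm T α m).det
    = ∑ j ∈ Finset.range (m + 1),
        gpoly T α (2 * j + 1) * gpoly T 0 (2 * j + 1)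
          * ∏ ℓ ∈ Finset.Ico (2 * j + 1) (2 * m + 1), T ℓ := by
  intro m
  induction m with
  | zero =>
    have : (Pm T α 0).det = 1 := Matrix.det_fin_zero
    rw [this, Finset.sum_range_one]
    rw [show gpoly T α (2*0+1) = 1 from rfl, show gpoly T 0 (2*0+1) = 1 from rfl]
    norm_num
  | succ n ih =>
    rw [Pm_update, Matrix.det_updateRow_add, Matrix.det_updateRow_smul,
      Matrix.updateRow_eq_self, det_single, AB_sub, Matrix.det_mul, An_det, Bn_det, ih]
    rw [Finset.sum_range_succ (fun j => gpoly T α (2 * j + 1) * gpoly T 0 (2 * j + 1)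
      * ∏ ℓ ∈ Finset.Ico (2 * j + 1) (2 * (n+1) + 1), T ℓ) (n+1)]
    have hlast : ∏ ℓ ∈ Finset.Ico (2 * (n+1) + 1) (2 * (n+1) + 1), T ℓ = 1 := by
      rw [Finset.Ico_self, Finset.prod_empty]
    rw [hlast, mul_one]
    have hterm : ∀ j ∈ Finset.range (n+1),
        gpoly T α (2 * j + 1) * gpoly T 0 (2 * j + 1)
          * ∏ ℓ ∈ Finset.Ico (2 * j + 1) (2 * (n+1) + 1), T ℓ
        = tJ T n * (gpoly T α (2 * j + 1) * gpoly T 0 (2 * j + 1)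
          * ∏ ℓ ∈ Finset.Ico (2 * j + 1) (2 * n + 1), T ℓ) := by
      intro j hj
      rw [Finset.mem_range] at hj
      have e1 : 2 * (n+1) + 1 = (2*n+2) + 1 := by omega
      rw [e1, Finset.prod_Ico_succ_top (by omega)]
      rw [show (2*n+2 : ℕ) = (2*n+1) + 1 from by omega,
        Finset.prod_Ico_succ_top (by omega)]
      unfold tJ
      rw [show 2*n+1+1 = 2*n+2 from by omega]
      ring
    rw [Finset.sum_congr rfl hterm, ← Finset.mul_sum]
    rw [show 2*(n+1)+1 = 2*n+3 from by omega]
    ring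

end

/-- Eq. (3.4): for `n ≥ 1` and real `α`,
`det(α c_{i+j+2} + c_{i+j+3})_{i,j=0}^{n-1}
  = (∑_{j=0}^{n} g_{2j+1}(α) g_{2j+1}(0) ∏_{ℓ=2j+1}^{2n} T_ℓ) · det(c_{i+j+1})_{i,j=0}^{n-1}`. -/
theorem hankel_shifted_two_term_dyck_odd (T : ℕ → ℝ) (hT : ∀ n, T n ≠ 0)
    (n : ℕ) (hn : 0 < n) (α : ℝ) :
    Matrix.det (Matrix.of fun i j : Fin n =>
        α * dyckGF T (2 * ((i : ℕ) + (j : ℕ) + 2)) 0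
          + dyckGF T (2 * ((i : ℕ) + (j : ℕ) + 3)) 0)
      = (∑ j ∈ Finset.range (n + 1),
            gpoly T α (2 * j + 1) * gpoly T 0 (2 * j + 1)
              * ∏ ℓ ∈ Finset.Ico (2 * j + 1) (2 * n + 1), T ℓ)
        * Matrix.det (Matrix.of fun i j : Fin n =>
            dyckGF T (2 * ((i : ℕ) + (j : ℕ) + 1)) 0) := by
  have hA : Matrix.det (Matrix.of fun i j : Fin n =>
        α * dyckGF T (2 * ((i : ℕ) + (j : ℕ) + 2)) 0
          + dyckGF T (2 * ((i : ℕ) + (j : ℕ) + 3)) 0)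
      = (Dw T n).det * (Pm T α n).det := by
    rw [I2 T α n, Matrix.det_mul, Matrix.det_mul, Ew_det, Matrix.det_transpose, I3 T α n,
      Matrix.det_mul, Ew_det]
    ring
  have hB : Matrix.det (Matrix.of fun i j : Fin n =>
        dyckGF T (2 * ((i : ℕ) + (j : ℕ) + 1)) 0) = (Dw T n).det := by
    rw [I1 T n, Matrix.det_mul, Matrix.det_mul, Ew_det, Matrix.det_transpose, Ew_det]
    ring
  rw [hA, hB, Pm_det T α n]
  ring
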